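/- arXiv:2305.04113 — 2 statements merged into one kernel-verified Lean document; each statement's English description precedes it below -/
import Mathlib

section
/- Let A₁,…,A_S be real matrices with Aₛ of size q×qₛ. If the intersection ⋂ₛ colspace(Aₛ) of their column spaces is nontrivial (contains a nonzero vector), then there exists a nonzero positive semidefinite q×q matrix C such that AₛAₛᵀ − C is positive semidefinite for every s = 1,…,S. -/
open Matrix

/-- Column space (range) of a real matrix. -/
def colspace {m n : ℕ} (A : Matrix (Fin m) (Fin n) ℝ) : Submodule ℝ (Fin m → ℝ) :=
  LinearMap.range A.mulVecLin

/-- a common nonzero direction in all column spaces yields a nonzero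
PSD matrix C with AₛAₛᵀ − C PSD for all s. -/
theorem stmt2 {q S : ℕ} (qs : Fin S → ℕ)
    (A : ∀ s : Fin S, Matrix (Fin q) (Fin (qs s)) ℝ)
    (h : ∃ v : Fin q → ℝ, v ≠ 0 ∧ ∀ s, v ∈ colspace (A s)) :
    ∃ C : Matrix (Fin q) (Fin q) ℝ, C ≠ 0 ∧ C.PosSemidef ∧
      ∀ s, (A s * (A s)ᵀ - C).PosSemidef := by
  obtain ⟨v, hv, hmem⟩ := h
  choose w hw using fun s => hmem s
  simp only [colspace, LinearMap.mem_range, Matrix.mulVecLin_apply] at hw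
  set M : ℝ := 1 + ∑ s, (w s) ⬝ᵥ (w s) with hMdef
  have hwnn : ∀ s, 0 ≤ (w s) ⬝ᵥ (w s) := fun s =>
    Finset.sum_nonneg fun i _ => mul_self_nonneg _
  have hM1 : (1:ℝ) ≤ M := le_add_of_nonneg_right (Finset.sum_nonneg fun s _ => hwnn s)
  have hMpos : (0:ℝ) < M := lt_of_lt_of_le one_pos hM1
  have hMs : ∀ s, (w s) ⬝ᵥ (w s) ≤ M := by
    intro s
    have : (w s) ⬝ᵥ (w s) ≤ ∑ t, (w t) ⬝ᵥ (w t) :=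
      Finset.single_le_sum (fun t _ => hwnn t) (Finset.mem_univ s)
    linarith
  refine ⟨M⁻¹ • vecMulVec v v, ?_, ?_, ?_⟩
  · obtain ⟨i, hi⟩ := Function.ne_iff.mp hv
    intro hC
    have : (M⁻¹ • vecMulVec v v) i i = 0 := by rw [hC]; rfl
    simp only [Matrix.smul_apply, vecMulVec_apply, smul_eq_mul] at this
    have : v i * v i = 0 := by
      rcases mul_eq_zero.mp this with h' | h'
      · exact absurd (inv_eq_zero.mp h') (ne_of_gt hMpos)
      · exact h'
    exact hi (mul_self_eq_zero.mp this)
  · apply PosSemidef.of_dotProduct_mulVec_nonneg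
    · ext i j
      simp [Matrix.conjTranspose, Matrix.smul_apply, vecMulVec_apply, mul_comm]
    · intro x
      have : star x ⬝ᵥ ((M⁻¹ • vecMulVec v v) *ᵥ x) = M⁻¹ * (v ⬝ᵥ x)^2 := by
        simp only [star_trivial, Matrix.smul_mulVec, dotProduct_smul, smul_eq_mul]
        congr 1
        simp only [dotProduct, mulVec, vecMulVec_apply, sq, Finset.mul_sum, Finset.sum_mul]
        rw [Finset.sum_comm]
        refine Finset.sum_congr rfl fun j _ => Finset.sum_congr rfl fun i _ => by ring
      rw [this]
      positivity
  · intro s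
    apply PosSemidef.of_dotProduct_mulVec_nonneg
    · have h1 : (A s * (A s)ᵀ).IsHermitian := isHermitian_mul_conjTranspose_self _
      have h2 : (M⁻¹ • vecMulVec v v).IsHermitian := by
        ext i j
        simp [Matrix.conjTranspose, Matrix.smul_apply, vecMulVec_apply, mul_comm]
      exact h1.sub h2
    · intro x
      simp only [star_trivial, Matrix.sub_mulVec, dotProduct_sub]
      have key : (v ⬝ᵥ x)^2 ≤ M * (x ⬝ᵥ ((A s * (A s)ᵀ) *ᵥ x)) := by
        have hAx : x ⬝ᵥ ((A s * (A s)ᵀ) *ᵥ x) = ∑ j, ((A s)ᵀ *ᵥ x) j ^ 2 := by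
          rw [← mulVec_mulVec, dotProduct_mulVec, ← mulVec_transpose, dotProduct]
          congr 1; ext j; rw [sq]
        have hvx : v ⬝ᵥ x = ∑ j, w s j * ((A s)ᵀ *ᵥ x) j := by
          rw [← hw s, dotProduct_comm, dotProduct_mulVec, ← mulVec_transpose, dotProduct]
          exact Finset.sum_congr rfl fun j _ => mul_comm _ _
        rw [hvx, hAx]
        calc (∑ j, w s j * ((A s)ᵀ *ᵥ x) j)^2
            ≤ (∑ j, (w s j)^2) * ∑ j, ((A s)ᵀ *ᵥ x) j ^ 2 :=
              Finset.sum_mul_sq_le_sq_mul_sq _ _ _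
          _ ≤ M * ∑ j, ((A s)ᵀ *ᵥ x) j ^ 2 := by
              apply mul_le_mul_of_nonneg_right
              · have : ∑ j, (w s j)^2 = (w s) ⬝ᵥ (w s) := by
                  simp [dotProduct, sq]
                rw [this]; exact hMs s
              · exact Finset.sum_nonneg fun j _ => sq_nonneg _
        
      have hC : x ⬝ᵥ ((M⁻¹ • vecMulVec v v) *ᵥ x) = M⁻¹ * (v ⬝ᵥ x)^2 := by
        simp only [Matrix.smul_mulVec, dotProduct_smul, smul_eq_mul]
        congr 1
        simp only [dotProduct, mulVec, vecMulVec_apply, sq, Finset.mul_sum, Finset.sum_mul]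
        rw [Finset.sum_comm]
        refine Finset.sum_congr rfl fun j _ => Finset.sum_congr rfl fun i _ => by ring
      rw [hC, sub_nonneg]
      rw [inv_mul_le_iff₀ hMpos] at *
      exact key
end

section
/- Let Σ₀ and Σ be d×d symmetric positive definite matrices. Then 2·KL(N(0,Σ₀) ‖ N(0,Σ)) = trace(Σ⁻¹Σ₀ − I) − log det(Σ⁻¹Σ₀) ≤ ‖Σ − Σ₀‖_F² / (λ_min(Σ₀)·λ_min(Σ)), where λ_min denotes the smallest eigenvalue and ‖·‖_F the Frobenius norm. -/
open Matrix BigOperators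

/-- Euclidean norm of a real vector. -/
noncomputable def vecEnorm {n : ℕ} (v : Fin n → ℝ) : ℝ := Real.sqrt (∑ i, (v i) ^ 2)

/-- Frobenius norm of a real matrix. -/
noncomputable def frobNorm {m n : ℕ} (A : Matrix (Fin m) (Fin n) ℝ) : ℝ :=
  Real.sqrt (∑ i, ∑ j, (A i j) ^ 2)

/-- Spectral norm (largest singular value) of a real matrix. -/
noncomputable def specNorm {m n : ℕ} (A : Matrix (Fin m) (Fin n) ℝ) : ℝ :=
  sSup {r | ∃ x : Fin n → ℝ, vecEnorm x = 1 ∧ r = vecEnorm (A.mulVec x)}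

/-- Smallest singular value of a real matrix. -/
noncomputable def sMin {m n : ℕ} (A : Matrix (Fin m) (Fin n) ℝ) : ℝ :=
  sInf {r | ∃ x : Fin n → ℝ, vecEnorm x = 1 ∧ r = vecEnorm (A.mulVec x)}

section AuxStmt9
variable {n : Type*} [Fintype n] [DecidableEq n]
open scoped MatrixOrder

lemma aux_trace_nonneg {R : Matrix n n ℝ} (hR : R.PosSemidef) : 0 ≤ R.trace := by
  rw [Matrix.trace]
  apply Finset.sum_nonneg
  intro i _
  have h := hR.dotProduct_mulVec_nonneg (Pi.single i 1)
  simpa [dotProduct, Matrix.mulVec_single, Pi.single_apply] using h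

lemma aux_trace_mul_nonneg {P Q : Matrix n n ℝ} (hP : P.PosSemidef) (hQ : Q.PosSemidef) :
    0 ≤ (P * Q).trace := by
  obtain ⟨B, rfl⟩ := CStarAlgebra.nonneg_iff_eq_star_mul_self.mp hP.nonneg
  rw [← Matrix.trace_mul_cycle]
  exact aux_trace_nonneg (hQ.mul_mul_conjTranspose_same B)

lemma aux_trace_le {P Q : Matrix n n ℝ} (hP : P.PosSemidef) {c : ℝ}
    (hQ : (c • (1 : Matrix n n ℝ) - Q).PosSemidef) : (Q * P).trace ≤ c * P.trace := by
  have h := aux_trace_mul_nonneg hQ hP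
  rw [Matrix.sub_mul, Matrix.smul_mul, Matrix.one_mul, Matrix.trace_sub, Matrix.trace_smul,
    smul_eq_mul] at h
  linarith

lemma aux_real_spectral {A : Matrix n n ℝ} (hA : A.IsHermitian) :
    A = (hA.eigenvectorUnitary : Matrix n n ℝ) * diagonal hA.eigenvalues *
      star (hA.eigenvectorUnitary : Matrix n n ℝ) := by
  have h := hA.spectral_theorem
  rwa [RCLike.ofReal_real_eq_id, Function.id_comp] at h

lemma aux_conj_mul {U X Y : Matrix n n ℝ} (hU : star U * U = 1) :
    (U * X * star U) * (U * Y * star U) = U * (X * Y) * star U := by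
  have h : star U * (U * (Y * star U)) = Y * star U := by
    rw [← Matrix.mul_assoc, hU, Matrix.one_mul]
  simp only [Matrix.mul_assoc, h]

lemma aux_posdef_inv_eq {A : Matrix n n ℝ} (hA : A.PosDef) :
    A⁻¹ = (hA.1.eigenvectorUnitary : Matrix n n ℝ) * diagonal (fun i => (hA.1.eigenvalues i)⁻¹) *
      star (hA.1.eigenvectorUnitary : Matrix n n ℝ) := by
  have key : ((hA.1.eigenvectorUnitary : Matrix n n ℝ) * diagonal hA.1.eigenvalues *
      star (hA.1.eigenvectorUnitary : Matrix n n ℝ)) *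
      ((hA.1.eigenvectorUnitary : Matrix n n ℝ) * diagonal (fun i => (hA.1.eigenvalues i)⁻¹) *
      star (hA.1.eigenvectorUnitary : Matrix n n ℝ)) = 1 := by
    rw [aux_conj_mul (Matrix.mem_unitaryGroup_iff'.mp (hA.1.eigenvectorUnitary).2), diagonal_mul_diagonal]
    have h : (fun i => hA.1.eigenvalues i * (hA.1.eigenvalues i)⁻¹) = fun _ => (1:ℝ) :=
      funext fun i => mul_inv_cancel₀ (hA.eigenvalues_pos i).ne'
    rw [h, show (diagonal (fun _ => (1:ℝ)) : Matrix n n ℝ) = 1 from diagonal_one,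
      Matrix.mul_one, Matrix.mem_unitaryGroup_iff.mp (hA.1.eigenvectorUnitary).2]
  rw [← aux_real_spectral hA.1] at key
  exact Matrix.inv_eq_right_inv key

lemma aux_trace_eigen {A : Matrix n n ℝ} (hA : A.IsHermitian) :
    A.trace = ∑ i, hA.eigenvalues i := by
  conv_lhs => rw [aux_real_spectral hA]
  rw [Matrix.trace_mul_cycle, Matrix.mem_unitaryGroup_iff'.mp (hA.eigenvectorUnitary).2, Matrix.one_mul, Matrix.trace_diagonal]

lemma aux_det_eigen {A : Matrix n n ℝ} (hA : A.IsHermitian) :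
    A.det = ∏ i, hA.eigenvalues i := by
  simpa [RCLike.ofReal_real_eq_id] using hA.det_eq_prod_eigenvalues

lemma aux_iInf_pos [Nonempty n] {A : Matrix n n ℝ} (hA : A.PosDef) :
    0 < ⨅ i, hA.1.eigenvalues i := by
  obtain ⟨i, hi⟩ := Finite.exists_min hA.1.eigenvalues
  have h : ⨅ j, hA.1.eigenvalues j = hA.1.eigenvalues i :=
    le_antisymm (ciInf_le (Set.finite_range _).bddBelow i) (le_ciInf hi)
  rw [h]; exact hA.eigenvalues_pos i

lemma aux_dominate [Nonempty n] {A : Matrix n n ℝ} (hA : A.PosDef) :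
    ((⨅ i, hA.1.eigenvalues i)⁻¹ • (1 : Matrix n n ℝ) - A⁻¹).PosSemidef := by
  set c := (⨅ i, hA.1.eigenvalues i)⁻¹ with hc
  set U := (hA.1.eigenvectorUnitary : Matrix n n ℝ) with hUdef
  have hU2 : U * star U = 1 := Matrix.mem_unitaryGroup_iff.mp (hA.1.eigenvectorUnitary).2
  have h1 : c • (1 : Matrix n n ℝ) = U * (c • (1 : Matrix n n ℝ)) * star U := by
    rw [Matrix.mul_smul, Matrix.smul_mul, Matrix.mul_one, hU2]
  rw [aux_posdef_inv_eq hA, ← hUdef, h1, ← Matrix.sub_mul, ← Matrix.mul_sub]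
  have h2 : c • (1 : Matrix n n ℝ) - diagonal (fun i => (hA.1.eigenvalues i)⁻¹)
      = diagonal (fun i => c - (hA.1.eigenvalues i)⁻¹) := by
    ext i j
    by_cases h : i = j <;> simp [Matrix.diagonal_apply, Matrix.one_apply, h]
  rw [h2, Matrix.star_eq_conjTranspose]
  refine (Matrix.posSemidef_diagonal_iff.mpr fun i => ?_).mul_mul_conjTranspose_same U
  have hpos := aux_iInf_pos hA
  have hle : ⨅ j, hA.1.eigenvalues j ≤ hA.1.eigenvalues i :=
    ciInf_le (Set.finite_range _).bddBelow i
  have : (hA.1.eigenvalues i)⁻¹ ≤ c := by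
    rw [hc]; exact inv_anti₀ hpos hle
  linarith

lemma aux_scalar {x : ℝ} (hx : 0 < x) : x - 1 - Real.log x ≤ x⁻¹ * (x - 1) ^ 2 := by
  have h := Real.log_le_sub_one_of_pos (inv_pos.mpr hx)
  rw [Real.log_inv] at h
  have hxx : x * x⁻¹ = 1 := mul_inv_cancel₀ hx.ne'
  nlinarith [sq_nonneg (x - 1)]

lemma aux_trace_pert {M : Matrix n n ℝ} (hM : M.PosDef) :
    (M⁻¹ * ((M - 1) * (M - 1))).trace
      = ∑ i, (hM.1.eigenvalues i)⁻¹ * (hM.1.eigenvalues i - 1) ^ 2 := by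
  set U := (hM.1.eigenvectorUnitary : Matrix n n ℝ) with hUdef
  have hU1 : star U * U = 1 := Matrix.mem_unitaryGroup_iff'.mp (hM.1.eigenvectorUnitary).2
  have hU2 : U * star U = 1 := Matrix.mem_unitaryGroup_iff.mp (hM.1.eigenvectorUnitary).2
  have h1 : M - 1 = U * diagonal (fun i => hM.1.eigenvalues i - 1) * star U := by
    have hone : (1 : Matrix n n ℝ) = U * diagonal (fun _ => (1:ℝ)) * star U := by
      rw [diagonal_one, Matrix.mul_one, hU2]
    conv_lhs => rw [aux_real_spectral hM.1, hone]
    rw [← Matrix.sub_mul, ← Matrix.mul_sub, diagonal_sub]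
  have h2 : M⁻¹ * ((M - 1) * (M - 1))
      = U * diagonal (fun i => (hM.1.eigenvalues i)⁻¹ *
          ((hM.1.eigenvalues i - 1) * (hM.1.eigenvalues i - 1))) * star U := by
    rw [h1, aux_posdef_inv_eq hM, ← hUdef, aux_conj_mul hU1, aux_conj_mul hU1,
      diagonal_mul_diagonal, diagonal_mul_diagonal]
  rw [h2, Matrix.trace_mul_cycle, hU1, Matrix.one_mul, Matrix.trace_diagonal]
  exact Finset.sum_congr rfl fun i _ => by ring

lemma aux_posdef_conj {A C : Matrix n n ℝ} (hA : A.PosDef) (hCl : C⁻¹ * C = 1) :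
    (Cᴴ * A * C).PosDef := by
  refine .of_dotProduct_mulVec_pos (isHermitian_conjTranspose_mul_mul C hA.1) fun x hx => ?_
  have hx' : C *ᵥ x ≠ 0 := by
    intro h
    apply hx
    have h2 := congrArg (fun v => C⁻¹ *ᵥ v) h
    simpa [Matrix.mulVec_mulVec, hCl] using h2
  have h := hA.dotProduct_mulVec_pos hx'
  simpa only [star_mulVec, dotProduct_mulVec, Matrix.vecMul_vecMul] using h

end AuxStmt9

open scoped MatrixOrder

/-- 2·KL(N(0,Σ₀)‖N(0,Σ)) = trace(Σ⁻¹Σ₀ − I) − log det(Σ⁻¹Σ₀)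
is bounded by ‖Σ − Σ₀‖_F²/(λ_min(Σ₀)λ_min(Σ)). -/

theorem stmt9 {d : ℕ} (hd : 0 < d) (S0 Sm : Matrix (Fin d) (Fin d) ℝ)
    (h0 : S0.PosDef) (h1 : Sm.PosDef) :
    (Sm⁻¹ * S0 - 1).trace - Real.log (Sm⁻¹ * S0).det ≤
      frobNorm (Sm - S0) ^ 2 / ((⨅ i, h0.1.eigenvalues i) * (⨅ i, h1.1.eigenvalues i)) := by
  haveI : Nonempty (Fin d) := ⟨⟨0, hd⟩⟩
  set l0 := ⨅ i, h0.1.eigenvalues i with hl0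
  set l1 := ⨅ i, h1.1.eigenvalues i with hl1
  have hl0pos : 0 < l0 := aux_iInf_pos h0
  have hl1pos : 0 < l1 := aux_iInf_pos h1
  have hSmInv : Sm⁻¹.PosDef := h1.inv
  set C := CFC.sqrt Sm⁻¹ with hCdef
  have hCC : C * C = Sm⁻¹ := CFC.sqrt_mul_sqrt_self _ hSmInv.posSemidef.nonneg
  have hCherm : C.IsHermitian := (CFC.sqrt_nonneg Sm⁻¹).posSemidef.1
  have hdetC : IsUnit C.det := by
    have h2 : C.det * C.det = Sm⁻¹.det := by rw [← Matrix.det_mul, hCC]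
    have h3 : (0:ℝ) < Sm⁻¹.det := hSmInv.det_pos
    have h4 : C.det ≠ 0 := by intro h; rw [h, mul_zero] at h2; linarith
    exact h4.isUnit
  have hCl : C⁻¹ * C = 1 := Matrix.nonsing_inv_mul C hdetC
  have hCr : C * C⁻¹ = 1 := Matrix.mul_nonsing_inv C hdetC
  set B := S0 - Sm with hBdef
  have hB : Bᴴ = B := h0.1.sub h1.1
  have hM : (C * S0 * C).PosDef := by
    have h2 := aux_posdef_conj h0 hCl
    rwa [hCherm.eq] at h2
  set M := C * S0 * C with hMdef
  set μ := hM.1.eigenvalues with hμ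
  have hμpos : ∀ i, 0 < μ i := fun i => hM.eigenvalues_pos i
  have t1 : (Sm⁻¹ * S0).trace = M.trace := by
    rw [← hCC, Matrix.mul_assoc, Matrix.trace_mul_comm, hMdef]
  have t2 : (Sm⁻¹ * S0).det = M.det := by
    rw [hMdef, ← hCC]; simp only [Matrix.det_mul]; ring
  have hLHS : (Sm⁻¹ * S0 - 1).trace - Real.log (Sm⁻¹ * S0).det
      = ∑ i, (μ i - 1 - Real.log (μ i)) := by
    rw [Matrix.trace_sub, Matrix.trace_one, t1, t2, aux_trace_eigen hM.1, aux_det_eigen hM.1,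
      Real.log_prod (fun i _ => (hμpos i).ne')]
    simp [Finset.sum_sub_distrib, Finset.sum_const, Finset.card_univ, nsmul_eq_mul]
    rfl
  have step1 : ∑ i, (μ i - 1 - Real.log (μ i)) ≤ ∑ i, (μ i)⁻¹ * (μ i - 1) ^ 2 :=
    Finset.sum_le_sum fun i _ => aux_scalar (hμpos i)
  have step2 : ∑ i, (μ i)⁻¹ * (μ i - 1) ^ 2 = (M⁻¹ * ((M - 1) * (M - 1))).trace :=
    (aux_trace_pert hM).symm
  have hMinv : M⁻¹ = C⁻¹ * (S0⁻¹ * C⁻¹) := by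
    rw [hMdef, Matrix.mul_inv_rev, Matrix.mul_inv_rev]
  have e1 : Sm * Sm⁻¹ = 1 := Matrix.mul_nonsing_inv Sm h1.det_pos.ne'.isUnit
  have hCSmC : C * Sm * C = 1 := by
    calc C * Sm * C = C * Sm * C * (C * C⁻¹) := by rw [hCr, Matrix.mul_one]
      _ = C * (Sm * ((C * C) * C⁻¹)) := by simp only [Matrix.mul_assoc]
      _ = C * (Sm * (Sm⁻¹ * C⁻¹)) := by rw [hCC]
      _ = C * ((Sm * Sm⁻¹) * C⁻¹) := by simp only [Matrix.mul_assoc]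
      _ = 1 := by rw [e1, Matrix.one_mul, hCr]
  have hM1 : M - 1 = C * B * C := by
    rw [hMdef, ← hCSmC, ← Matrix.sub_mul, ← Matrix.mul_sub, ← hBdef]
  have r1 : ∀ X : Matrix (Fin d) (Fin d) ℝ, C⁻¹ * (C * X) = X := fun X => by
    rw [← Matrix.mul_assoc, hCl, Matrix.one_mul]
  have r2 : ∀ X : Matrix (Fin d) (Fin d) ℝ, C * (C * X) = Sm⁻¹ * X := fun X => by
    rw [← Matrix.mul_assoc, hCC]
  have hD : M⁻¹ * ((M - 1) * (M - 1)) = C⁻¹ * ((S0⁻¹ * (B * (Sm⁻¹ * B))) * C) := by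
    rw [hMinv, hM1]
    simp only [Matrix.mul_assoc, r1, r2]
  have step3 : (M⁻¹ * ((M - 1) * (M - 1))).trace = (S0⁻¹ * (B * (Sm⁻¹ * B))).trace := by
    rw [hD, Matrix.trace_mul_cycle', ← Matrix.mul_assoc, hCr, Matrix.one_mul]
  have hP : (B * (Sm⁻¹ * B)).PosSemidef := by
    have h2 := hSmInv.posSemidef.conjTranspose_mul_mul_same B
    rwa [hB, Matrix.mul_assoc] at h2
  have step4 : (S0⁻¹ * (B * (Sm⁻¹ * B))).trace ≤ l0⁻¹ * (B * (Sm⁻¹ * B)).trace :=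
    aux_trace_le hP (aux_dominate h0)
  have hBB : (B * B).PosSemidef := by
    have h2 := Matrix.posSemidef_self_mul_conjTranspose B
    rwa [hB] at h2
  have step5 : (B * (Sm⁻¹ * B)).trace = (Sm⁻¹ * (B * B)).trace := by
    rw [Matrix.trace_mul_comm, Matrix.mul_assoc]
  have step6 : (Sm⁻¹ * (B * B)).trace ≤ l1⁻¹ * (B * B).trace :=
    aux_trace_le hBB (aux_dominate h1)
  have hsymm : ∀ i j, B j i = B i j := fun i j => by
    have h2 := congrFun (congrFun hB i) j
    simpa using h2
  have hfr : (B * B).trace = frobNorm (Sm - S0) ^ 2 := by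
    rw [frobNorm, Real.sq_sqrt (Finset.sum_nonneg fun i _ =>
      Finset.sum_nonneg fun j _ => sq_nonneg ((Sm - S0) i j)), Matrix.trace]
    simp only [Matrix.diag, Matrix.mul_apply]
    refine Finset.sum_congr rfl fun i _ => Finset.sum_congr rfl fun j _ => ?_
    have h2 : (Sm - S0) i j = -(B i j) := by rw [hBdef]; simp [Matrix.sub_apply]
    rw [hsymm i j, h2]; ring
  calc (Sm⁻¹ * S0 - 1).trace - Real.log (Sm⁻¹ * S0).det
      = ∑ i, (μ i - 1 - Real.log (μ i)) := hLHS
    _ ≤ ∑ i, (μ i)⁻¹ * (μ i - 1) ^ 2 := step1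
    _ = (M⁻¹ * ((M - 1) * (M - 1))).trace := step2
    _ = (S0⁻¹ * (B * (Sm⁻¹ * B))).trace := step3
    _ ≤ l0⁻¹ * (B * (Sm⁻¹ * B)).trace := step4
    _ ≤ l0⁻¹ * (l1⁻¹ * (B * B).trace) :=
        mul_le_mul_of_nonneg_left ((le_of_eq step5).trans step6) (inv_pos.mpr hl0pos).le
    _ = frobNorm (Sm - S0) ^ 2 / (l0 * l1) := by
        rw [hfr, div_eq_mul_inv, mul_inv]; ring
end
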